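/- Let u, v ∈ ℝ³ be orthonormal (‖u‖ = ‖v‖ = 1, u·v = 0), let a, b ∈ ℝ with a² + b² < 1, and set r₀ := a u + b v, ρ₀ := (1/2)(I + r₀·σ), F := u·σ. For θ ∈ ℝ define Z_θ := Tr(ρ₀ exp(θF)) and ρ_θ := Z_θ⁻¹ · exp((θ/2)F) ρ₀ exp((θ/2)F). Then: Z_θ = cosh θ + a sinh θ > 0; setting c := b/√(1−a²) and ξ(θ) := ((1+a)e^{2θ} − (1−a)) / ((1+a)e^{2θ} + (1−a)), one has ξ(θ) ∈ (−1,1) and ρ_θ = (1/2)(I + (ξ(θ) u + c √(1−ξ(θ)²) v)·σ); moreover Tr(ρ_θ F) = ξ(θ). Thus the e-geodesic through ρ₀ generated by F is the semi-ellipse {(1/2)(I + (ξ u + c√(1−ξ²) v)·σ) : −1 < ξ < 1} and ξ is the expectation of F along it. -/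

import Mathlib

open Matrix
open scoped ComplexOrder

noncomputable section

/-- The Pauli matrices. -/
def pauli : Fin 3 → Matrix (Fin 2) (Fin 2) ℂ
  | 0 => !![0, 1; 1, 0]
  | 1 => !![0, -Complex.I; Complex.I, 0]
  | 2 => !![1, 0; 0, -1]

/-- `a·σ` for `a ∈ ℝ³`. -/
def dotSigma (a : Fin 3 → ℝ) : Matrix (Fin 2) (Fin 2) ℂ := ∑ i, a i • pauli i

/-- The qubit state `(1/2)(I + r·σ)`. -/
def qubitState (r : Fin 3 → ℝ) : Matrix (Fin 2) (Fin 2) ℂ :=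
  ((1 : ℝ)/2) • ((1 : Matrix (Fin 2) (Fin 2) ℂ) + dotSigma r)

/-- The normalization `Z_θ := Tr(ρ₀ exp(θF))`. -/
def Zgeo (u v : Fin 3 → ℝ) (a b θ : ℝ) : ℂ :=
  (qubitState (a • u + b • v) * NormedSpace.exp ((θ : ℂ) • dotSigma u)).trace

/-- The e-geodesic `ρ_θ := Z_θ⁻¹ exp((θ/2)F) ρ₀ exp((θ/2)F)`. -/
def rhoGeo (u v : Fin 3 → ℝ) (a b θ : ℝ) : Matrix (Fin 2) (Fin 2) ℂ :=
  (Zgeo u v a b θ)⁻¹ •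
    (NormedSpace.exp (((θ/2 : ℝ) : ℂ) • dotSigma u) * qubitState (a • u + b • v) *
      NormedSpace.exp (((θ/2 : ℝ) : ℂ) • dotSigma u))

/-- The m-affine parameter `ξ(θ)`. -/
def xiGeo (a θ : ℝ) : ℝ :=
  ((1 + a) * Real.exp (2*θ) - (1 - a)) / ((1 + a) * Real.exp (2*θ) + (1 - a))

lemma dotSigma_apply (a : Fin 3 → ℝ) :
    dotSigma a = !![(a 2 : ℂ), (a 0 : ℂ) - (a 1 : ℂ) * Complex.I;
                    (a 0 : ℂ) + (a 1 : ℂ) * Complex.I, -(a 2 : ℂ)] := by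
  ext i j
  fin_cases i <;> fin_cases j <;>
    simp [dotSigma, pauli, Fin.sum_univ_three, Matrix.add_apply, Matrix.smul_apply,
      Complex.real_smul] <;> ring

lemma dotSigma_mul_self (a : Fin 3 → ℝ) (h : a ⬝ᵥ a = 1) :
    dotSigma a * dotSigma a = 1 := by
  have hC : (a 0 : ℂ)^2 + (a 1 : ℂ)^2 + (a 2 : ℂ)^2 = 1 := by
    have : a 0 ^2 + a 1 ^2 + a 2 ^2 = 1 := by
      simpa [dotProduct, Fin.sum_univ_three, sq] using h
    exact_mod_cast congrArg (Complex.ofReal) this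
  rw [dotSigma_apply]
  ext i j
  fin_cases i <;> fin_cases j <;>
    simp [Matrix.mul_apply, Fin.sum_univ_two, Matrix.one_apply, Complex.I_sq] <;>
    first | ring1 | linear_combination hC - (a 1:ℂ)^2 * Complex.I_sq | linear_combination hC | linear_combination -hC

lemma dotSigma_anticomm (a b : Fin 3 → ℝ) (h : a ⬝ᵥ b = 0) :
    dotSigma b * dotSigma a = -(dotSigma a * dotSigma b) := by
  have hC : (a 0 : ℂ) * b 0 + (a 1 : ℂ) * b 1 + (a 2 : ℂ) * b 2 = 0 := by
    have : a 0 * b 0 + a 1 * b 1 + a 2 * b 2 = 0 := by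
      simpa [dotProduct, Fin.sum_univ_three] using h
    exact_mod_cast congrArg (Complex.ofReal) this
  rw [dotSigma_apply, dotSigma_apply]
  ext i j
  fin_cases i <;> fin_cases j <;>
    simp [Matrix.mul_apply, Fin.sum_univ_two, Complex.I_sq] <;>
    first | ring1 | linear_combination (2:ℂ) * hC - 2*(a 1:ℂ)*(b 1:ℂ) * Complex.I_sq | linear_combination (2:ℂ) * hC | linear_combination (-2:ℂ) * hC

lemma trace_dotSigma (a : Fin 3 → ℝ) : (dotSigma a).trace = 0 := by
  rw [dotSigma_apply]; simp [Matrix.trace, Fin.sum_univ_two]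

lemma trace_dotSigma_mul (a b : Fin 3 → ℝ) :
    (dotSigma a * dotSigma b).trace = ((2 * (a ⬝ᵥ b) : ℝ) : ℂ) := by
  rw [dotSigma_apply, dotSigma_apply]
  simp [Matrix.trace, Matrix.mul_apply, Fin.sum_univ_two, dotProduct, Fin.sum_univ_three,
    Complex.I_sq]
  push_cast
  linear_combination (-2:ℂ)*(a 1:ℂ)*(b 1:ℂ) * Complex.I_sq

lemma dotSigma_linear (u v : Fin 3 → ℝ) (x y : ℝ) :
    dotSigma (x • u + y • v) = (x : ℂ) • dotSigma u + (y : ℂ) • dotSigma v := by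
  ext i j
  simp [dotSigma_apply, Matrix.add_apply, Matrix.smul_apply]
  fin_cases i <;> fin_cases j <;> simp <;> push_cast <;> ring

open Nat in
lemma exp_smul_sq_one (M : Matrix (Fin 2) (Fin 2) ℂ) (hM : M * M = 1) (c : ℂ) :
    NormedSpace.exp (c • M) = Complex.cosh c • 1 + Complex.sinh c • M := by
  have hM2 : M ^ 2 = 1 := by rw [sq, hM]
  have heven : ∀ n : ℕ, (((2*n)! : ℂ))⁻¹ • (c • M) ^ (2*n)
      = (c ^ (2*n) / (2*n)!) • (1 : Matrix (Fin 2) (Fin 2) ℂ) := by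
    intro n
    have h1 : M ^ (2*n) = 1 := by rw [pow_mul, hM2, one_pow]
    rw [smul_pow, h1, smul_smul]
    congr 1
    field_simp
  have hodd : ∀ n : ℕ, (((2*n+1)! : ℂ))⁻¹ • (c • M) ^ (2*n+1)
      = (c ^ (2*n+1) / (2*n+1)!) • M := by
    intro n
    have h1 : M ^ (2*n) = 1 := by rw [pow_mul, hM2, one_pow]
    have h2 : M ^ (2*n+1) = M := by rw [pow_succ, h1, one_mul]
    rw [smul_pow, h2, smul_smul]
    congr 1
    field_simp
  rw [NormedSpace.exp_eq_tsum (𝕂 := ℂ)]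
  refine (HasSum.even_add_odd ?_ ?_).tsum_eq
  · simpa only [heven] using (Complex.hasSum_cosh c).smul_const (1 : Matrix (Fin 2) (Fin 2) ℂ)
  · simpa only [hodd] using (Complex.hasSum_sinh c).smul_const M

lemma real_smul_matrix (r : ℝ) (M : Matrix (Fin 2) (Fin 2) ℂ) : r • M = (r : ℂ) • M := by
  ext i j; simp [Matrix.smul_apply, Complex.real_smul]

set_option maxHeartbeats 2000000 in
/-- The e-geodesic through `ρ₀ = (1/2)(I + (au+bv)·σ)` generated by
`F = u·σ` is the semi-ellipse `ξ ↦ (1/2)(I + (ξu + c√(1−ξ²)v)·σ)`, with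
`Z_θ = cosh θ + a sinh θ > 0`, `ξ(θ) ∈ (−1,1)` and `Tr(ρ_θ F) = ξ(θ)`. -/
theorem qubit_e_geodesic (u v : Fin 3 → ℝ)
    (hu : u ⬝ᵥ u = 1) (hv : v ⬝ᵥ v = 1) (huv : u ⬝ᵥ v = 0)
    (a b : ℝ) (hab : a^2 + b^2 < 1) (θ : ℝ) :
    Zgeo u v a b θ = ((Real.cosh θ + a * Real.sinh θ : ℝ) : ℂ) ∧
    0 < Real.cosh θ + a * Real.sinh θ ∧
    -1 < xiGeo a θ ∧ xiGeo a θ < 1 ∧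
    rhoGeo u v a b θ =
      qubitState (xiGeo a θ • u +
        ((b / Real.sqrt (1 - a^2)) * Real.sqrt (1 - (xiGeo a θ)^2)) • v) ∧
    (rhoGeo u v a b θ * dotSigma u).trace = ((xiGeo a θ : ℝ) : ℂ) := by
  have ha1 : a^2 < 1 := by nlinarith [sq_nonneg b]
  have ham : -1 < a := by nlinarith
  have haM : a < 1 := by nlinarith
  set F := dotSigma u with hFdef
  set G := dotSigma v with hGdef
  have hF : F * F = 1 := dotSigma_mul_self u hu
  have hGF : G * F = -(F * G) := dotSigma_anticomm u v huv
  have trF : F.trace = 0 := trace_dotSigma u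
  have trG : G.trace = 0 := trace_dotSigma v
  have trFG : (F * G).trace = 0 := by rw [trace_dotSigma_mul, huv]; simp
  have tr1 : (1 : Matrix (Fin 2) (Fin 2) ℂ).trace = 2 := by simp
  have hsmul := real_smul_matrix
  have hρ : qubitState (a • u + b • v) = (1/2 : ℂ) • (1 + (a:ℂ) • F + (b:ℂ) • G) := by
    rw [qubitState, dotSigma_linear, hsmul]
    push_cast
    rw [add_assoc]
  have hcosh := Real.cosh_pos θ
  have hid := Real.cosh_sq_sub_sinh_sq θ
  have hZpos : 0 < Real.cosh θ + a * Real.sinh θ := by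
    nlinarith [sq_nonneg (Real.cosh θ + a * Real.sinh θ), sq_nonneg (a * Real.cosh θ + Real.sinh θ),
      sq_nonneg (Real.sinh θ)]
  have hZne : (((Real.cosh θ + a * Real.sinh θ : ℝ)) : ℂ) ≠ 0 := by
    exact_mod_cast Complex.ofReal_ne_zero.mpr hZpos.ne'
  -- exp computations
  have hexpθ : NormedSpace.exp ((θ:ℂ) • F)
      = ((Real.cosh θ : ℂ)) • 1 + ((Real.sinh θ : ℂ)) • F := by
    rw [exp_smul_sq_one F hF, Complex.ofReal_cosh, Complex.ofReal_sinh]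
  have hexp2 : NormedSpace.exp (((θ/2 : ℝ):ℂ) • F)
      = ((Real.cosh (θ/2) : ℂ)) • 1 + ((Real.sinh (θ/2) : ℂ)) • F := by
    rw [exp_smul_sq_one F hF, Complex.ofReal_cosh, Complex.ofReal_sinh]
  -- Z value
  have hZval : Zgeo u v a b θ = ((Real.cosh θ + a * Real.sinh θ : ℝ) : ℂ) := by
    rw [Zgeo, hρ, hexpθ]
    simp only [smul_mul_assoc, mul_add, add_mul, mul_smul_comm, smul_smul, one_mul, mul_one,
      hF, hGF, Matrix.trace_add, Matrix.trace_smul, Matrix.trace_neg, trF, trG, trFG, tr1,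
      smul_eq_mul, smul_add]
    push_cast
    ring
  -- half-angle identities
  have hch' : Real.cosh θ = Real.cosh (θ/2)^2 + Real.sinh (θ/2)^2 := by
    have h := Real.cosh_two_mul (θ/2); rw [show 2*(θ/2) = θ by ring] at h; linarith
  have hsh' : Real.sinh θ = 2 * Real.sinh (θ/2) * Real.cosh (θ/2) := by
    have h := Real.sinh_two_mul (θ/2); rw [show 2*(θ/2) = θ by ring] at h; linarith
  have hpq1 : Real.cosh (θ/2)^2 - Real.sinh (θ/2)^2 = 1 := Real.cosh_sq_sub_sinh_sq (θ/2)
  -- key sandwich computation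
  have h2 : F * (F * G) = G := by rw [← mul_assoc, hF, one_mul]
  have hkey : (((Real.cosh (θ/2) : ℂ)) • 1 + ((Real.sinh (θ/2) : ℂ)) • F)
        * ((1/2 : ℂ) • (1 + (a:ℂ) • F + (b:ℂ) • G))
        * (((Real.cosh (θ/2) : ℂ)) • 1 + ((Real.sinh (θ/2) : ℂ)) • F)
      = (1/2 : ℂ) • (((Real.cosh θ + a * Real.sinh θ : ℝ):ℂ) • 1
          + ((a * Real.cosh θ + Real.sinh θ : ℝ):ℂ) • F + (b:ℂ) • G) := by
    have hc2 : Complex.cosh (θ:ℂ) = Complex.cosh ((θ:ℂ)/2)^2 + Complex.sinh ((θ:ℂ)/2)^2 := by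
      have h := Complex.cosh_two_mul ((θ:ℂ)/2)
      rw [show 2*((θ:ℂ)/2) = (θ:ℂ) by ring] at h
      linear_combination h
    have hs2 : Complex.sinh (θ:ℂ) = 2 * Complex.sinh ((θ:ℂ)/2) * Complex.cosh ((θ:ℂ)/2) := by
      have h := Complex.sinh_two_mul ((θ:ℂ)/2)
      rw [show 2*((θ:ℂ)/2) = (θ:ℂ) by ring] at h
      linear_combination h
    have hq2 : Complex.cosh ((θ:ℂ)/2)^2 - Complex.sinh ((θ:ℂ)/2)^2 = 1 :=
      Complex.cosh_sq_sub_sinh_sq _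
    simp only [smul_mul_assoc, mul_add, add_mul, mul_smul_comm, smul_smul, smul_add, one_mul,
      mul_one, mul_assoc, hF, hGF, h2, mul_neg, neg_mul, smul_neg]
    match_scalars <;> push_cast <;>
      first
        | ring1
        | linear_combination (1/2 : ℂ) * hc2 + ((a:ℂ)/2) * hs2
        | linear_combination (-1/2 : ℂ) * hc2 - ((a:ℂ)/2) * hs2
        | linear_combination ((a:ℂ)/2) * hc2 + (1/2 : ℂ) * hs2
        | linear_combination (-(a:ℂ)/2) * hc2 - (1/2 : ℂ) * hs2
        | linear_combination ((b:ℂ)/2) * hq2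
        | linear_combination (-(b:ℂ)/2) * hq2
  -- xi identities
  have hD : 0 < (1+a) * Real.exp (2*θ) + (1-a) := by nlinarith [Real.exp_pos (2*θ)]
  have hx1 : xiGeo a θ < 1 := by
    rw [xiGeo, div_lt_one hD]; nlinarith [Real.exp_pos (2*θ)]
  have hx2 : -1 < xiGeo a θ := by
    rw [xiGeo, lt_div_iff₀ hD]; nlinarith [Real.exp_pos (2*θ)]
  have hξ : xiGeo a θ = (a * Real.cosh θ + Real.sinh θ) / (Real.cosh θ + a * Real.sinh θ) := by
    rw [xiGeo, eq_div_iff hZpos.ne', div_mul_eq_mul_div, eq_comm, eq_div_iff hD.ne']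
    rw [Real.cosh_eq, Real.sinh_eq, show (2*θ) = θ + θ by ring, Real.exp_add, Real.exp_neg]
    field_simp [Real.exp_ne_zero]
    ring
  have h1mx : 1 - (xiGeo a θ)^2 = (1 - a^2) / (Real.cosh θ + a * Real.sinh θ)^2 := by
    rw [hξ, div_pow, eq_div_iff (pow_ne_zero _ hZpos.ne'), sub_mul,
      div_mul_cancel₀ _ (pow_ne_zero _ hZpos.ne'), one_mul]
    linear_combination (1 - a^2) * hid
  have hsq : Real.sqrt (1 - (xiGeo a θ)^2)
      = Real.sqrt (1 - a^2) / (Real.cosh θ + a * Real.sinh θ) := by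
    rw [h1mx, Real.sqrt_div (by nlinarith) _, Real.sqrt_sq hZpos.le]
  have hs0 : Real.sqrt (1 - a^2) ≠ 0 := ne_of_gt (Real.sqrt_pos.mpr (by nlinarith))
  have hη : (b / Real.sqrt (1 - a^2)) * Real.sqrt (1 - (xiGeo a θ)^2)
      = b / (Real.cosh θ + a * Real.sinh θ) := by
    rw [hsq]; field_simp
  -- rho computation
  have hrho : rhoGeo u v a b θ
      = (1/2 : ℂ) • (1 + (((a * Real.cosh θ + Real.sinh θ) / (Real.cosh θ + a * Real.sinh θ) : ℝ):ℂ) • F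
          + (((b / (Real.cosh θ + a * Real.sinh θ)) : ℝ):ℂ) • G) := by
    have hZC : Complex.cosh (θ:ℂ) + (a:ℂ) * Complex.sinh (θ:ℂ) ≠ 0 := by
      rw [← Complex.ofReal_cosh, ← Complex.ofReal_sinh]
      exact_mod_cast hZne
    rw [rhoGeo, hZval, hexp2, hρ, hkey]
    rw [smul_smul]
    push_cast
    match_scalars <;> field_simp <;> first | ring1 | (left; first | trivial | ring1)
  refine ⟨hZval, hZpos, hx2, hx1, ?_, ?_⟩
  · rw [hrho, qubitState, dotSigma_linear, hsmul, hη, hξ]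
    push_cast
    rw [add_assoc]
  · rw [hrho, hξ]
    simp only [smul_mul_assoc, add_mul, smul_add, one_mul, hF, hGF, Matrix.trace_add,
      Matrix.trace_smul, Matrix.trace_neg, trF, trFG, tr1, smul_eq_mul]
    push_cast
    ring
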